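/- The family ES(ℝ) of everywhere surjective functions has property B(e_𝔠, e_𝔠): there exists a set 𝓑 of ℝ-linear subspaces of ℝ^ℝ with #𝓑 ≥ e_𝔠 such that every B ∈ 𝓑 satisfies B ⊆ ES(ℝ) ∪ {0} and dim_ℝ B ≥ e_𝔠, and ES(ℝ) ∪ {0} = ⋃ 𝓑. -/

import Mathlib

open Cardinal

/-- `f` is everywhere surjective: `f(U) = ℝ` for every nonempty open `U ⊆ ℝ`. -/
def IsEverywhereSurjective (f : ℝ → ℝ) : Prop :=
  ∀ U : Set ℝ, IsOpen U → U.Nonempty → f '' U = Set.univ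

/-- The cardinal `e_𝔠`: the least cardinality of a family `F ⊆ ℝ^ℝ` such that every
`φ : ℝ → ℝ` agrees with some member of `F` on a set of cardinality `< 𝔠`. -/
noncomputable def eContinuum : Cardinal :=
  sInf {c : Cardinal | ∃ F : Set (ℝ → ℝ), #F = c ∧
    ∀ φ : ℝ → ℝ, ∃ f ∈ F, #{x : ℝ | f x = φ x} < Cardinal.continuum}

open Submodule


lemma zero_not_ES : ¬ IsEverywhereSurjective 0 := by
  intro h
  have := h Set.univ isOpen_univ ⟨0, trivial⟩
  rw [Set.eq_univ_iff_forall] at this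
  obtain ⟨x, -, hx⟩ := this 1
  simp at hx

lemma smul_ES {c : ℝ} (hc : c ≠ 0) {f : ℝ → ℝ} (hf : IsEverywhereSurjective f) :
    IsEverywhereSurjective (c • f) := by
  intro U hU hne
  ext y
  simp only [Set.mem_univ, iff_true]
  have : c⁻¹ * y ∈ f '' U := (hf U hU hne) ▸ trivial
  obtain ⟨x, hx, hfx⟩ := this
  exact ⟨x, hx, by simp [hfx]; field_simp⟩

lemma exists_rat_Ioo_subset {U : Set ℝ} (hU : IsOpen U) (hne : U.Nonempty) :
    ∃ p q : ℚ, p < q ∧ Set.Ioo (p:ℝ) (q:ℝ) ⊆ U := by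
  obtain ⟨x, hx⟩ := hne
  obtain ⟨ε, hε, hball⟩ := Metric.isOpen_iff.mp hU x hx
  obtain ⟨p, hp1, hp2⟩ := exists_rat_btwn (by linarith : x - ε < x)
  obtain ⟨q, hq1, hq2⟩ := exists_rat_btwn (by linarith : x < x + ε)
  refine ⟨p, q, by exact_mod_cast hp2.trans hq1, fun z hz => hball ?_⟩
  simp only [Metric.mem_ball, Real.dist_eq, abs_lt]
  obtain ⟨h1, h2⟩ := hz
  constructor <;> nlinarith

/-- the defining set of eContinuum is nonempty -/
lemma eSet_nonempty : {c : Cardinal | ∃ F : Set (ℝ → ℝ), #F = c ∧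
    ∀ φ : ℝ → ℝ, ∃ f ∈ F, #{x : ℝ | f x = φ x} < Cardinal.continuum}.Nonempty := by
  refine ⟨_, Set.univ, rfl, fun φ => ⟨φ + 1, trivial, ?_⟩⟩
  have : {x : ℝ | (φ + 1) x = φ x} = ∅ := by
    ext x; simp
  rw [this]
  simpa using continuum_pos

lemma eContinuum_mem : ∃ F : Set (ℝ → ℝ), #F = eContinuum ∧
    ∀ φ : ℝ → ℝ, ∃ f ∈ F, #{x : ℝ | f x = φ x} < Cardinal.continuum :=
  csInf_mem eSet_nonempty

lemma continuum_lt_eContinuum : Cardinal.continuum < eContinuum := by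
  obtain ⟨F, hF, hprop⟩ := eContinuum_mem
  rw [← hF]
  by_contra hle
  push_neg at hle
  -- #F ≤ continuum
  have hFne : F.Nonempty := by
    rcases F.eq_empty_or_nonempty with rfl | h
    · obtain ⟨f, hf, -⟩ := hprop 0; exact hf.elim
    · exact h
  have h1 : #(↥F × ℝ) ≤ Cardinal.continuum := by
    rw [Cardinal.mk_prod]
    simp only [Cardinal.lift_id, Cardinal.mk_real]
    calc #F * continuum ≤ continuum * continuum :=
          mul_le_mul_left hle _
      _ = continuum := by rw [Cardinal.mul_eq_self aleph0_le_continuum]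
  have h2 : Cardinal.continuum ≤ #(↥F × ℝ) := by
    obtain ⟨f, hf⟩ := hFne
    calc continuum = #ℝ := Cardinal.mk_real.symm
      _ ≤ #(↥F × ℝ) := Cardinal.mk_le_of_injective
          (f := fun r => ((⟨f, hf⟩ : ↥F), r)) (fun a b h => by simpa using h)
  have heq : #(↥F × ℝ) = #ℝ := by rw [Cardinal.mk_real]; exact le_antisymm h1 h2
  obtain ⟨e⟩ := Cardinal.eq.mp heq
  -- build φ
  set φ : ℝ → ℝ := fun x => ((e.symm x).1 : ℝ → ℝ) x with hφ
  obtain ⟨f, hf, hsmall⟩ := hprop φ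
  have hbig : Cardinal.continuum ≤ #{x : ℝ | f x = φ x} := by
    rw [← Cardinal.mk_real]
    refine Cardinal.mk_le_of_injective (f := fun r : ℝ =>
      (⟨e (⟨f, hf⟩, r), ?_⟩ : {x : ℝ | f x = φ x})) ?_
    · show f _ = φ _
      rw [hφ]; simp only [Equiv.symm_apply_apply]
    · intro a b hab
      have := congrArg (fun z => (e.symm z.1).2) hab
      simpa using this
  exact absurd hsmall (not_lt.mpr hbig)

lemma exists_hamel_set : ∃ S : Set ℝ, S ⊆ Set.Ioo (0:ℝ) 1 ∧ #S = continuum ∧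
    LinearIndependent ℚ (fun x : ↥(insert (1:ℝ) S) => (x : ℝ)) := by
  classical
  set ι := Module.Basis.ofVectorSpaceIndex ℚ ℝ
  set b := Module.Basis.ofVectorSpace ℚ ℝ
  -- ι is infinite
  have hinf : Infinite ↥ι := by
    by_contra hfin
    rw [not_infinite_iff_finite] at hfin
    have : Countable (↥ι →₀ ℚ) := by infer_instance
    have : Countable ℝ := Countable.of_equiv _ b.repr.toEquiv.symm
    have : #ℝ ≤ ℵ₀ := Cardinal.mk_le_aleph0
    rw [Cardinal.mk_real] at this
    exact absurd this (not_le.mpr Cardinal.aleph0_lt_continuum)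
  have hι : #↥ι = continuum := by
    have h1 : #ℝ = #(↥ι →₀ ℚ) := b.repr.toEquiv.cardinal_eq
    have hq : #ℚ = ℵ₀ := Cardinal.mk_eq_aleph0 ℚ
    rw [Cardinal.mk_finsupp_of_infinite, Cardinal.mk_real, hq] at h1
    rw [max_eq_left (aleph0_le_mk ↥ι)] at h1
    exact h1.symm
  -- support of 1
  set T : Finset ↥ι := (b.repr 1).support with hT
  set J := {i : ↥ι // i ∉ T}
  -- choose rational scalars
  have hchoice : ∀ i : ↥ι, ∃ c : ℚˣ, ((c : ℚ) : ℝ) * (b i) ∈ Set.Ioo (0:ℝ) 1 := by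
    intro i
    have hne := b.ne_zero i
    rcases lt_or_gt_of_ne (Ne.symm hne) with hpos | hneg
    · -- b i > 0 : choose c ∈ (0, 1/(b i))
      obtain ⟨c, hc1, hc2⟩ := exists_rat_btwn (by positivity : (0:ℝ) < 1 / (b i))
      have hc0 : (0:ℚ) < c := by exact_mod_cast hc1
      refine ⟨Units.mk0 c hc0.ne', ⟨by positivity, ?_⟩⟩
      · rw [div_eq_mul_inv] at hc2
        calc (c:ℝ) * b i < (1 * (b i)⁻¹) * b i := by
              apply mul_lt_mul_of_pos_right _ hpos; simpa using hc2
          _ = 1 := by field_simp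
    · -- b i < 0
      have : (0:ℝ) < 1 / (-(b i)) := by
        have : (0:ℝ) < -(b i) := by linarith
        positivity
      obtain ⟨c, hc1, hc2⟩ := exists_rat_btwn this
      have hc0 : (0:ℚ) < c := by exact_mod_cast hc1
      refine ⟨Units.mk0 (-c) (by simpa using hc0.ne'), ⟨?_, ?_⟩⟩
      · simp only [Units.val_mk0]
        push_cast
        nlinarith [hc0, hc1]
      · simp only [Units.val_mk0]
        push_cast
        have hbn : (0:ℝ) < -(b i) := by linarith
        rw [div_eq_mul_inv] at hc2
        nlinarith [mul_lt_mul_of_pos_right hc2 hbn, inv_mul_cancel₀ hbn.ne']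
  choose c hc using hchoice
  -- the scaled family
  set v : J → ℝ := fun j => ((c j : ℚ) • b j : ℝ) with hv
  have hvIoo : ∀ j : J, v j ∈ Set.Ioo (0:ℝ) 1 := by
    intro j; simpa [hv, Rat.smul_def] using hc (j : ↥ι)
  have hbJ : LinearIndependent ℚ (fun j : J => b j) :=
    b.linearIndependent.comp (fun j : J => (j : ↥ι)) Subtype.coe_injective
  have hvind : LinearIndependent ℚ v := by
    have := hbJ.units_smul (fun j => c j)
    convert this using 1
    ext j; simp [hv, Units.smul_def]
  have hvinj : Function.Injective v := hvind.injective
  set S := Set.range v with hS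
  have hSsub : S ⊆ Set.Ioo (0:ℝ) 1 := by
    rintro x ⟨j, rfl⟩; exact hvIoo j
  have hScard : #S = continuum := by
    rw [hS, Cardinal.mk_range_eq _ hvinj]
    -- #J = #ι
    have : #J = #↥ι := by
      have h1 : #↥((↑T : Set ↥ι)ᶜ) = #↥ι := by
        apply Cardinal.mk_compl_of_infinite
        rw [hι]
        exact lt_of_lt_of_le (Cardinal.finset_card_lt_aleph0 T) aleph0_le_continuum
      rw [← h1]
      apply Cardinal.mk_congr
      exact Equiv.subtypeEquivRight (fun i => by simp)
    rw [this, hι]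
  -- span facts
  have hSspan : S ⊆ ↑(span ℚ (b '' {i : ↥ι | i ∉ T})) := by
    rintro x ⟨j, rfl⟩
    have : b j ∈ span ℚ (b '' {i : ↥ι | i ∉ T}) :=
      subset_span ⟨j, j.2, rfl⟩
    simpa [hv] using Submodule.smul_mem _ ((c j : ℚ)) this
  have h1span : (1:ℝ) ∉ span ℚ S := by
    intro h1
    have h2 : (1:ℝ) ∈ span ℚ (b '' {i : ↥ι | i ∉ T}) :=
      span_le.mpr hSspan h1
    rw [Module.Basis.mem_span_image] at h2
    have hTne : T.Nonempty := by
      rw [hT, Finsupp.support_nonempty_iff]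
      intro h0
      have := b.repr.injective (by rw [h0, map_zero] : b.repr 1 = b.repr 0)
      norm_num at this
    obtain ⟨i, hi⟩ := hTne
    exact (h2 hi) hi
  have hSind : LinearIndependent ℚ (fun x : ↥S => (x : ℝ)) := (linearIndepOn_id_range_iff hvinj).mpr hvind
  exact ⟨S, hSsub, hScard, LinearIndepOn.id_insert hSind h1span⟩


lemma exists_Phi : ∃ Φ : ℚ → ℚ → ℝ → ℝ → ℝ,
    (∀ p q : ℚ, p < q → ∀ y s : ℝ, Φ p q y s ∈ Set.Ioo (p:ℝ) (q:ℝ)) ∧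
    (∀ p q p' q' : ℚ, p < q → p' < q' → ∀ y s y' s' : ℝ,
      Φ p q y s = Φ p' q' y' s' → y = y' ∧ s = s') := by
  classical
  obtain ⟨S, hSsub, hScard, hSind⟩ := exists_hamel_set
  have hcard : #(ℝ × ℝ) = #↥S := by
    rw [Cardinal.mk_prod, Cardinal.mk_real, hScard]
    simp [Cardinal.mul_eq_self aleph0_le_continuum]
  obtain ⟨K⟩ := Cardinal.eq.mp hcard
  refine ⟨fun p q y s => (p:ℝ) + ((q:ℝ) - p) * (K (y, s) : ℝ), ?_, ?_⟩
  · intro p q hpq y s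
    obtain ⟨h0, h1⟩ := hSsub (K (y,s)).2
    have hq : (p:ℝ) < q := by exact_mod_cast hpq
    simp only []
    constructor <;> nlinarith
  · intro p q p' q' hpq hpq' y s y' s' heq
    set u := K (y, s) with hu
    set u' := K (y', s') with hu'
    by_cases huu : (u:ℝ) = (u':ℝ)
    · have : u = u' := Subtype.ext huu
      have := K.injective (hu ▸ hu' ▸ this)
      exact ⟨congrArg Prod.fst this, congrArg Prod.snd this⟩
    · exfalso
      have hq : (p:ℝ) < q := by exact_mod_cast hpq
      -- u ∈ span ℚ {1, u'}
      have hmem : (u:ℝ) ∈ span ℚ ({(1:ℝ), (u':ℝ)} : Set ℝ) := by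
        rw [mem_span_pair]
        refine ⟨(p' - p)/(q - p), (q' - p')/(q - p), ?_⟩
        have hne : ((q:ℝ) - p) ≠ 0 := by linarith
        have hneq : (q - p : ℚ) ≠ 0 := by
          intro h0; apply hne; exact_mod_cast (by exact_mod_cast h0 : ((q - p:ℚ):ℝ) = 0)
        push_cast
        rw [Rat.smul_def, Rat.smul_def]
        push_cast
        field_simp
        ring_nf
        ring_nf at heq
        linarith [heq]
      -- but u ∉ span ℚ {1, u'} by independence
      have hu1 : (u:ℝ) ≠ 1 := by
        obtain ⟨-, h1⟩ := hSsub u.2; exact ne_of_lt h1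
      have hu'1 : (u':ℝ) ≠ 1 := by
        obtain ⟨-, h1⟩ := hSsub u'.2; exact ne_of_lt h1
      set x1 : ↥(insert (1:ℝ) S) := ⟨1, Set.mem_insert _ _⟩
      set xu : ↥(insert (1:ℝ) S) := ⟨u, Set.mem_insert_of_mem _ u.2⟩
      set xu' : ↥(insert (1:ℝ) S) := ⟨u', Set.mem_insert_of_mem _ u'.2⟩
      have hnot := hSind.notMem_span_image (s := {x1, xu'}) (x := xu) (by
        simp only [Set.mem_insert_iff, Set.mem_singleton_iff]
        push_neg
        exact ⟨fun h => hu1 (by simpa using congrArg Subtype.val h),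
               fun h => huu (by simpa using congrArg Subtype.val h)⟩)
      apply hnot
      have himg : (fun x : ↥(insert (1:ℝ) S) => (x:ℝ)) '' {x1, xu'} = {(1:ℝ), (u':ℝ)} := by
        simp [Set.image_insert_eq, x1, xu']
      rw [himg]
      exact hmem


lemma additivity (G : Set (ℝ → ℝ)) (hG : #G < eContinuum) :
    ∃ h : ℝ → ℝ, ∀ g ∈ G, IsEverywhereSurjective (h + g) := by
  classical
  rcases G.eq_empty_or_nonempty with rfl | ⟨g₀, hg₀⟩
  · exact ⟨0, fun g hg => hg.elim⟩
  obtain ⟨Φ, hΦ1, hΦ2⟩ := exists_Phi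
  set Qi := {pq : ℚ × ℚ // pq.1 < pq.2}
  set A := ↥G × (Qi × ℝ)
  set Fam : A → (ℝ → ℝ) := fun a => fun s =>
    a.2.2 - (a.1 : ℝ → ℝ) (Φ a.2.1.1.1 a.2.1.1.2 a.2.2 s) with hFam
  set F' : Set (ℝ → ℝ) := Set.range Fam with hF'
  have hF'card : #F' < eContinuum := by
    calc #F' ≤ #A := Cardinal.mk_range_le
      _ ≤ max #↥G continuum := by
          rw [Cardinal.mk_prod, Cardinal.mk_prod]
          simp only [Cardinal.lift_id]
          have hQi : #Qi ≤ ℵ₀ := Cardinal.mk_le_aleph0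
          calc #↥G * (#Qi * #ℝ) ≤ max #↥G continuum * (ℵ₀ * continuum) := by
                apply mul_le_mul' (le_max_left _ _)
                exact mul_le_mul' hQi (le_of_eq Cardinal.mk_real)
            _ = max #↥G continuum * continuum := by
                rw [Cardinal.aleph0_mul_eq aleph0_le_continuum]
            _ ≤ max #↥G continuum * max #↥G continuum :=
                mul_le_mul' le_rfl (le_max_right _ _)
            _ = max #↥G continuum := Cardinal.mul_eq_self
                (le_trans aleph0_le_continuum (le_max_right _ _))
      _ < eContinuum := max_lt hG continuum_lt_eContinuum
  -- F' cannot have the agreement property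
  have hnoprop : ¬ (∀ φ : ℝ → ℝ, ∃ f ∈ F', #{x : ℝ | f x = φ x} < Cardinal.continuum) := by
    intro hprop
    have : eContinuum ≤ #F' := csInf_le ⟨0, fun c _ => by simp⟩ ⟨F', rfl, hprop⟩
    exact absurd hF'card (not_lt.mpr this)
  push_neg at hnoprop
  obtain ⟨φ, hφ⟩ := hnoprop
  -- define h
  set h : ℝ → ℝ := fun x =>
    if hx : ∃ a : Qi × ℝ × ℝ, Φ a.1.1.1 a.1.1.2 a.2.1 a.2.2 = x
    then φ hx.choose.2.2 else 0 with hh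
  refine ⟨h, fun g hg U hU hne => ?_⟩
  obtain ⟨p, q, hpq, hsub⟩ := exists_rat_Ioo_subset hU hne
  apply Set.eq_univ_of_forall
  intro y
  -- the family member
  set a : A := (⟨g, hg⟩, (⟨(p, q), hpq⟩, y)) with ha
  have hmem : Fam a ∈ F' := ⟨a, rfl⟩
  have hbig := hφ (Fam a) hmem
  have hnonempty : {s : ℝ | Fam a s = φ s}.Nonempty := by
    rw [Set.nonempty_iff_ne_empty]
    intro hempty
    rw [hempty] at hbig
    simp at hbig
    exact (ne_of_gt Cardinal.continuum_pos) hbig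
  obtain ⟨s, hs⟩ := hnonempty
  have hs' : y - g (Φ p q y s) = φ s := hs
  set x : ℝ := Φ p q y s with hx
  have hxU : x ∈ U := hsub (hΦ1 p q hpq y s)
  refine ⟨x, hxU, ?_⟩
  -- compute h x
  have hex : ∃ a' : Qi × ℝ × ℝ, Φ a'.1.1.1 a'.1.1.2 a'.2.1 a'.2.2 = x :=
    ⟨(⟨(p, q), hpq⟩, y, s), rfl⟩
  have hhx : h x = φ s := by
    rw [hh]
    simp only [hex, dif_pos]
    obtain ⟨hy', hs''⟩ := hΦ2 _ _ p q hex.choose.1.2 hpq _ _ y s hex.choose_spec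
    rw [hs'']
  show h x + g x = y
  rw [hhx, ← hs']
  ring


lemma submodule_card_le (M : Submodule ℝ (ℝ → ℝ)) :
    #↥M ≤ max (Module.rank ℝ ↥M) continuum := by
  classical
  set b := Module.Basis.ofVectorSpace ℝ ↥M
  have hcard : #↥M = #(↥(Module.Basis.ofVectorSpaceIndex ℝ ↥M) →₀ ℝ) := b.repr.toEquiv.cardinal_eq
  rw [hcard]
  by_cases hfin : Finite ↥(Module.Basis.ofVectorSpaceIndex ℝ ↥M)
  · haveI := Fintype.ofFinite ↥(Module.Basis.ofVectorSpaceIndex ℝ ↥M)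
    rw [Cardinal.mk_finsupp_of_fintype, Cardinal.mk_real]
    exact le_max_of_le_right (Cardinal.power_nat_le aleph0_le_continuum)
  · haveI : Infinite ↥(Module.Basis.ofVectorSpaceIndex ℝ ↥M) := not_finite_iff_infinite.mp hfin
    rw [Cardinal.mk_finsupp_of_infinite, Cardinal.mk_real, b.mk_eq_rank'']

lemma exists_maximal_submodule {f : ℝ → ℝ} (hf : IsEverywhereSurjective f) :
    ∃ M : Submodule ℝ (ℝ → ℝ), f ∈ M ∧
      (M : Set (ℝ → ℝ)) ⊆ {g | IsEverywhereSurjective g} ∪ {0} ∧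
      eContinuum ≤ Module.rank ℝ ↥M := by
  classical
  set s : Set (Submodule ℝ (ℝ → ℝ)) :=
    {M | (M : Set (ℝ → ℝ)) ⊆ {g | IsEverywhereSurjective g} ∪ {0}} with hs
  have hspan : span ℝ {f} ∈ s := by
    intro g hg
    obtain ⟨c, rfl⟩ := mem_span_singleton.mp hg
    rcases eq_or_ne c 0 with rfl | hc
    · right; simp
    · left; exact smul_ES hc hf
  obtain ⟨M, hle, hMs, hMmax⟩ := zorn_le_nonempty₀ s (fun c hcs hchain y hy => by
    refine ⟨sSup c, ?_, fun z hz => le_sSup hz⟩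
    intro g hg
    rw [SetLike.mem_coe, Submodule.mem_sSup_of_directed ⟨y, hy⟩ hchain.directedOn] at hg
    obtain ⟨N, hN, hgN⟩ := hg
    exact hcs hN hgN) (span ℝ {f}) hspan
  have hfM : f ∈ M := hle (mem_span_singleton_self f)
  refine ⟨M, hfM, hMs, ?_⟩
  by_contra hrank
  push_neg at hrank
  have hcard : #↥M < eContinuum :=
    lt_of_le_of_lt (submodule_card_le M) (max_lt hrank continuum_lt_eContinuum)
  have hcard' : #↥(M : Set (ℝ → ℝ)) < eContinuum := hcard
  obtain ⟨h, hh⟩ := additivity (M : Set (ℝ → ℝ)) hcard'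
  have hhM : h ∉ M := by
    intro hmem
    have := hh (-h) (by exact neg_mem hmem)
    rw [add_neg_cancel] at this
    exact zero_not_ES this
  have hM' : M ⊔ span ℝ {h} ∈ s := by
    intro x hx
    rw [SetLike.mem_coe, mem_sup] at hx
    obtain ⟨m, hm, z, hz, rfl⟩ := hx
    obtain ⟨c, rfl⟩ := mem_span_singleton.mp hz
    rcases eq_or_ne c 0 with rfl | hc
    · simpa using hMs hm
    · left
      have hmem' : c⁻¹ • m ∈ M := smul_mem M c⁻¹ hm
      have hES := hh (c⁻¹ • m) hmem'
      have heq : m + c • h = c • (h + c⁻¹ • m) := by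
        funext t
        simp only [Pi.add_apply, Pi.smul_apply, smul_eq_mul]
        field_simp
        ring
      rw [heq]
      exact smul_ES hc hES
  have : M ⊔ span ℝ {h} ≤ M := hMmax hM' le_sup_left
  exact hhM (this (le_sup_right (a := M) (mem_span_singleton_self h)))

lemma exists_ES : ∃ f : ℝ → ℝ, IsEverywhereSurjective f := by
  have h1 : #↥({0} : Set (ℝ → ℝ)) < eContinuum := by
    rw [Cardinal.mk_singleton]
    exact lt_trans (lt_of_lt_of_le Cardinal.one_lt_aleph0 aleph0_le_continuum)
      continuum_lt_eContinuum
  obtain ⟨h, hh⟩ := additivity {0} h1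
  exact ⟨h + 0, hh 0 rfl⟩

theorem everywhereSurjective_property_B :
    ∃ 𝓑 : Set (Submodule ℝ (ℝ → ℝ)),
      eContinuum ≤ #𝓑 ∧
      (∀ B ∈ 𝓑, (B : Set (ℝ → ℝ)) ⊆ {f | IsEverywhereSurjective f} ∪ {0} ∧
        eContinuum ≤ Module.rank ℝ B) ∧
      {f | IsEverywhereSurjective f} ∪ {0} = ⋃ B ∈ 𝓑, (B : Set (ℝ → ℝ)) := by
  classical
  obtain ⟨f₀, hf₀⟩ := exists_ES
  have hMex : ∀ f : ℝ → ℝ, IsEverywhereSurjective f → ∃ M : Submodule ℝ (ℝ → ℝ), f ∈ M ∧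
      (M : Set (ℝ → ℝ)) ⊆ {g | IsEverywhereSurjective g} ∪ {0} ∧
      eContinuum ≤ Module.rank ℝ ↥M := fun f hf => exists_maximal_submodule hf
  choose Mf hMf1 hMf2 hMf3 using hMex
  set M₀ := Mf f₀ hf₀ with hM₀
  set b := Module.Basis.ofVectorSpace ℝ ↥M₀ with hb
  set ι := Module.Basis.ofVectorSpaceIndex ℝ ↥M₀ with hι0
  have hι : eContinuum ≤ #↥ι := by
    rw [b.mk_eq_rank'']; exact hMf3 f₀ hf₀
  have hιinf : Infinite ↥ι := by
    rw [Cardinal.infinite_iff]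
    exact le_trans (le_trans aleph0_le_continuum continuum_lt_eContinuum.le) hι
  set v : ↥ι → (ℝ → ℝ) := fun i => ((b i : ↥M₀) : ℝ → ℝ) with hv
  have hvind : LinearIndependent ℝ v := b.linearIndependent.map' M₀.subtype (ker_subtype M₀)
  have hvinj : Function.Injective v := hvind.injective
  have hvmem : ∀ i, v i ∈ M₀ := fun i => (b i).2
  set D : ↥ι → Submodule ℝ (ℝ → ℝ) := fun i => span ℝ (v '' {i}ᶜ) with hD
  have hDM₀ : ∀ i, D i ≤ M₀ := by
    intro i
    rw [hD]
    apply span_le.mpr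
    rintro x ⟨j, -, rfl⟩
    exact hvmem j
  have hDrank : ∀ i, eContinuum ≤ Module.rank ℝ ↥(D i) := by
    intro i
    have hw : LinearIndependent ℝ (fun j : ↥({i}ᶜ : Set ↥ι) => v j) :=
      hvind.comp _ Subtype.coe_injective
    have hr := rank_span hw
    have hrange : Set.range (fun j : ↥({i}ᶜ : Set ↥ι) => v j) = v '' {i}ᶜ :=
      (Set.image_eq_range v ({i}ᶜ : Set ↥ι)).symm
    rw [hrange] at hr
    have hcompl : #↥({i}ᶜ : Set ↥ι) = #↥ι := by
      apply Cardinal.mk_compl_of_infinite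
      rw [Cardinal.mk_singleton]
      exact lt_of_lt_of_le Cardinal.one_lt_aleph0 (Cardinal.aleph0_le_mk ↥ι)
    rw [hD]
    rw [hr, Cardinal.mk_image_eq hvinj, hcompl]
    exact hι
  have hDninc : ∀ i, v i ∉ D i := fun i =>
    hvind.notMem_span_image (by simp)
  have hDinj : Function.Injective D := by
    intro i j hij
    by_contra hne
    apply hDninc i
    rw [hij]
    exact subset_span ⟨i, by simp [Ne.symm]; exact fun h => hne (h ▸ rfl), rfl⟩
  set 𝓑 : Set (Submodule ℝ (ℝ → ℝ)) :=
    {B | ∃ f, ∃ hf : IsEverywhereSurjective f, B = Mf f hf} ∪ Set.range D with h𝓑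
  refine ⟨𝓑, ?_, ?_, ?_⟩
  · calc eContinuum ≤ #↥ι := hι
      _ = #↥(Set.range D) := (Cardinal.mk_range_eq D hDinj).symm
      _ ≤ #↥𝓑 := Cardinal.mk_le_mk_of_subset Set.subset_union_right
  · rintro B (⟨f, hf, rfl⟩ | ⟨i, rfl⟩)
    · exact ⟨hMf2 f hf, hMf3 f hf⟩
    · refine ⟨fun x hx => hMf2 f₀ hf₀ (hDM₀ i hx), hDrank i⟩
  · ext g
    simp only [Set.mem_iUnion, SetLike.mem_coe]
    constructor
    · rintro (hg | hg)
      · exact ⟨Mf g hg, Or.inl ⟨g, hg, rfl⟩, hMf1 g hg⟩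
      · rw [Set.mem_singleton_iff] at hg
        subst hg
        exact ⟨M₀, Or.inl ⟨f₀, hf₀, rfl⟩, zero_mem _⟩
    · rintro ⟨B, hB, hgB⟩
      rcases hB with ⟨f, hf, rfl⟩ | ⟨i, rfl⟩
      · exact hMf2 f hf hgB
      · exact hMf2 f₀ hf₀ (hDM₀ i hgB)
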